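/- Let n ≥ 2, p ∈ ℝ^{n-1}, q ∈ ℝ^n, and let g(p,q) = I + (1+q_n²)·p·pᵀ + q_n·(p·(π q)ᵀ + (π q)·pᵀ) + (π q)·(π q)ᵀ. Then g(p,q) is a symmetric matrix, and for every vector v ∈ ℝ^{n-1}, vᵀ g(p,q) v = |v|² + (q_n (p·v) + (π q)·v)² + (p·v)² ≥ |v|². In particular g(p,q) is positive definite and hence invertible. -/

import Mathlib

noncomputable section
open Matrix

/-- The metric-type matrix `g(p,q)` from the paper's Appendix (`m = n-1`). -/
def gMat (m : ℕ) (p : Fin m → ℝ) (q : Fin (m + 1) → ℝ) : Matrix (Fin m) (Fin m) ℝ :=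
  1 + (1 + q (Fin.last m) ^ 2) • vecMulVec p p
    + q (Fin.last m) • (vecMulVec p (fun i => q i.castSucc) + vecMulVec (fun i => q i.castSucc) p)
    + vecMulVec (fun i => q i.castSucc) (fun i => q i.castSucc)

lemma dot_vecMulVec_mulVec (m : ℕ) (a b v : Fin m → ℝ) :
    v ⬝ᵥ (vecMulVec a b).mulVec v = (∑ i, a i * v i) * (∑ i, b i * v i) := by
  simp only [dotProduct, mulVec, vecMulVec_apply, Finset.sum_mul, Finset.mul_sum]
  rw [Finset.sum_comm]
  congr 1; ext i; congr 1; ext j; ring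

lemma quad_form (m : ℕ) (p : Fin m → ℝ) (q : Fin (m + 1) → ℝ) (v : Fin m → ℝ) :
    v ⬝ᵥ (gMat m p q).mulVec v
      = (∑ i, v i * v i)
        + (q (Fin.last m) * (∑ i, p i * v i) + ∑ i, q i.castSucc * v i) ^ 2
        + (∑ i, p i * v i) ^ 2 := by
  rw [gMat]
  simp only [add_mulVec, smul_mulVec, one_mulVec, dotProduct_add,
    dotProduct_smul, dot_vecMulVec_mulVec, smul_eq_mul]
  simp only [dotProduct]
  ring

/-- `g(p,q)` is symmetric, `vᵀ g(p,q) v = |v|² + (qₙ(p·v) + (πq)·v)² + (p·v)²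
≥ |v|²`, and `g(p,q)` is positive definite and invertible. -/
theorem stmt1 (n : ℕ) (hn : 2 ≤ n) (m : ℕ) (hm : m + 1 = n)
    (p : Fin m → ℝ) (q : Fin (m + 1) → ℝ) :
    (gMat m p q).IsSymm ∧
    (∀ v : EuclideanSpace ℝ (Fin m),
      v ⬝ᵥ (gMat m p q).mulVec v
        = ‖v‖ ^ 2
          + (q (Fin.last m) * (∑ i, p i * v i) + ∑ i, q i.castSucc * v i) ^ 2
          + (∑ i, p i * v i) ^ 2 ∧
      v ⬝ᵥ (gMat m p q).mulVec v ≥ ‖v‖ ^ 2) ∧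
    (gMat m p q).PosDef ∧ IsUnit (gMat m p q) := by
  have hnorm : ∀ v : EuclideanSpace ℝ (Fin m), ‖v‖ ^ 2 = ∑ i, v i * v i := by
    intro v
    rw [EuclideanSpace.norm_sq_eq]
    simp [Real.norm_eq_abs, sq_abs, sq]
  have hsymm : (gMat m p q).IsSymm := by
    unfold gMat
    ext i j
    simp [Matrix.transpose_apply, vecMulVec_apply, Matrix.one_apply, eq_comm]
    ring
  have hquad : ∀ v : EuclideanSpace ℝ (Fin m),
      v ⬝ᵥ (gMat m p q).mulVec v
        = ‖v‖ ^ 2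
          + (q (Fin.last m) * (∑ i, p i * v i) + ∑ i, q i.castSucc * v i) ^ 2
          + (∑ i, p i * v i) ^ 2 := by
    intro v; rw [hnorm v]; exact quad_form m p q v
  have hge : ∀ v : EuclideanSpace ℝ (Fin m),
      v ⬝ᵥ (gMat m p q).mulVec v ≥ ‖v‖ ^ 2 := by
    intro v; rw [hquad v]; nlinarith [sq_nonneg (q (Fin.last m) * (∑ i, p i * v i) + ∑ i, q i.castSucc * v i), sq_nonneg (∑ i, p i * v i)]
  have hpd : (gMat m p q).PosDef := by
    rw [Matrix.posDef_iff_dotProduct_mulVec]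
    refine ⟨?_, ?_⟩
    · rw [Matrix.IsHermitian]
      simpa [Matrix.IsSymm] using hsymm
    · intro x hx
      have h2 : (0:ℝ) < ∑ i, x i * x i := by
        obtain ⟨i, hi⟩ := Function.ne_iff.mp hx
        exact Finset.sum_pos' (fun j _ => mul_self_nonneg _)
          ⟨i, Finset.mem_univ i, mul_self_pos.mpr hi⟩
      have : star x = x := by simp
      rw [this, quad_form m p q x]
      nlinarith [sq_nonneg (q (Fin.last m) * (∑ i, p i * x i) + ∑ i, q i.castSucc * x i),
        sq_nonneg (∑ i, p i * x i)]
  exact ⟨hsymm, fun v => ⟨hquad v, hge v⟩, hpd, hpd.isUnit⟩
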